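/- Let S : [0,1] → ℝ be integrable. For integers K, R ≥ 1 and an R×R complex matrix M, define the K×K matrix Ψ_{K,R}(M) = ∫_0^1 S(ν) ( a_R(ν)^H M a_R(ν) ) d_K(ν) d_K(ν)^H dν. Then for every K×K matrix A and every R×R matrix B, (1/K) Tr( A Ψ_{K,R}(B) ) = (1/R) Tr( Ψ_{R,K}(A) B ). -/

import Mathlib

open MeasureTheory Matrix Complex

/-- The Fourier vector `d_R(ν) = (1, e^{2πiν}, …, e^{2πi(R−1)ν})ᵀ`. -/
noncomputable def dvec (R : ℕ) (ν : ℝ) : Fin R → ℂ :=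
  fun j => Complex.exp (2 * (Real.pi : ℂ) * Complex.I * ((j : ℕ) : ℂ) * (ν : ℂ))

/-- The normalized Fourier vector `a_R(ν) = d_R(ν)/√R`. -/
noncomputable def avec (R : ℕ) (ν : ℝ) : Fin R → ℂ :=
  ((1 / Real.sqrt R : ℝ) : ℂ) • dvec R ν

/-- Entrywise (Bochner) integral over `[0,1]` of a matrix-valued function. -/
noncomputable def mInt {m n : ℕ} (f : ℝ → Matrix (Fin m) (Fin n) ℂ) :
    Matrix (Fin m) (Fin n) ℂ :=
  Matrix.of fun i j => ∫ ν in Set.Icc (0 : ℝ) 1, f ν i j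

/-- The Toeplitzification operator
`Ψ_{K,R}(M) = ∫₀¹ S(ν) (a_R(ν)ᴴ M a_R(ν)) d_K(ν) d_K(ν)ᴴ dν`. -/
noncomputable def Psi (S : ℝ → ℝ) (K R : ℕ) (M : Matrix (Fin R) (Fin R) ℂ) :
    Matrix (Fin K) (Fin K) ℂ :=
  mInt fun ν =>
    ((S ν : ℂ) * (star (avec R ν) ⬝ᵥ M.mulVec (avec R ν))) •
      Matrix.vecMulVec (dvec K ν) (star (dvec K ν))

/-- The quadratic form `a_n(ν)ᴴ M a_n(ν)`. -/
noncomputable def qform {n : ℕ} (M : Matrix (Fin n) (Fin n) ℂ) (ν : ℝ) : ℂ :=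
  star (avec n ν) ⬝ᵥ M.mulVec (avec n ν)

lemma continuous_dvec_apply (n : ℕ) (i : Fin n) :
    Continuous fun ν : ℝ => dvec n ν i := by
  unfold dvec
  exact Complex.continuous_exp.comp (continuous_const.mul Complex.continuous_ofReal)

lemma continuous_avec_apply (n : ℕ) (i : Fin n) :
    Continuous fun ν : ℝ => avec n ν i := by
  unfold avec
  simp only [Pi.smul_apply, smul_eq_mul]
  exact continuous_const.mul (continuous_dvec_apply n i)

lemma continuous_qform {n : ℕ} (M : Matrix (Fin n) (Fin n) ℂ) :
    Continuous fun ν => qform M ν := by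
  unfold qform
  simp only [dotProduct, Matrix.mulVec, Pi.star_apply]
  refine continuous_finset_sum _ fun i _ => ?_
  exact (continuous_star.comp (continuous_avec_apply n i)).mul
    (continuous_finset_sum _ fun j _ => continuous_const.mul (continuous_avec_apply n j))

lemma integrable_S_mul (S : ℝ → ℝ) (hS : IntegrableOn S (Set.Icc (0 : ℝ) 1))
    (g : ℝ → ℂ) (hg : Continuous g) :
    IntegrableOn (fun ν => (S ν : ℂ) * g ν) (Set.Icc (0 : ℝ) 1) := by
  obtain ⟨C, hC⟩ := (isCompact_Icc (a := (0:ℝ)) (b := 1)).exists_bound_of_continuousOn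
    hg.continuousOn
  have hSC : Integrable (fun ν => (S ν : ℂ)) (volume.restrict (Set.Icc (0:ℝ) 1)) := hS.ofReal
  have hbd : ∀ᵐ ν ∂(volume.restrict (Set.Icc (0:ℝ) 1)), ‖g ν‖ ≤ C :=
    (ae_restrict_iff' measurableSet_Icc).2 (Filter.Eventually.of_forall hC)
  have := hSC.bdd_mul hg.aestronglyMeasurable.restrict hbd
  simpa [mul_comm, IntegrableOn] using this

lemma trace_mul_vecMulVec {n : ℕ} (A : Matrix (Fin n) (Fin n) ℂ) (u v : Fin n → ℂ) :
    (A * Matrix.vecMulVec u v).trace = v ⬝ᵥ A.mulVec u := by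
  simp only [Matrix.trace, Matrix.diag, Matrix.mul_apply, Matrix.vecMulVec_apply,
    dotProduct, Matrix.mulVec, Finset.mul_sum]
  exact Finset.sum_congr rfl fun i _ => Finset.sum_congr rfl fun j _ => by ring

lemma dot_dvec {n : ℕ} (hn : 1 ≤ n) (M : Matrix (Fin n) (Fin n) ℂ) (ν : ℝ) :
    star (dvec n ν) ⬝ᵥ M.mulVec (dvec n ν) = (n : ℂ) * qform M ν := by
  have hn0 : (0:ℝ) < (n:ℝ) := by exact_mod_cast hn
  have hstar : star (avec n ν) = ((1 / Real.sqrt n : ℝ) : ℂ) • star (dvec n ν) := by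
    unfold avec
    simp [star_smul, Complex.star_def, Complex.conj_ofReal]
  have hc : (n : ℂ) * (((1 / Real.sqrt n : ℝ) : ℂ) * ((1 / Real.sqrt n : ℝ) : ℂ)) = 1 := by
    have h : ((1 / Real.sqrt n : ℝ)) * ((1 / Real.sqrt n : ℝ)) = 1 / n := by
      rw [div_mul_div_comm, one_mul, Real.mul_self_sqrt hn0.le]
    rw [← Complex.ofReal_mul, h]
    push_cast
    rw [mul_one_div, div_self (by exact_mod_cast hn0.ne')]
  unfold qform
  rw [hstar, show avec n ν = ((1 / Real.sqrt n : ℝ) : ℂ) • dvec n ν from rfl,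
    Matrix.mulVec_smul, smul_dotProduct, dotProduct_smul, smul_eq_mul, smul_eq_mul]
  linear_combination (-(star (dvec n ν) ⬝ᵥ M.mulVec (dvec n ν))) * hc

lemma trace_mul_mInt {n : ℕ} (A : Matrix (Fin n) (Fin n) ℂ)
    (f : ℝ → Matrix (Fin n) (Fin n) ℂ)
    (hf : ∀ i j, IntegrableOn (fun ν => f ν i j) (Set.Icc (0 : ℝ) 1)) :
    (A * mInt f).trace = ∫ ν in Set.Icc (0:ℝ) 1, (A * f ν).trace := by
  simp only [Matrix.trace, Matrix.diag, Matrix.mul_apply, mInt, Matrix.of_apply]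
  have h1 : ∀ i j : Fin n, A i j * ∫ ν in Set.Icc (0:ℝ) 1, f ν j i
      = ∫ ν in Set.Icc (0:ℝ) 1, A i j * f ν j i := fun i j =>
    (integral_const_mul _ _).symm
  calc (∑ i, ∑ j, A i j * ∫ ν in Set.Icc (0:ℝ) 1, f ν j i)
      = ∑ i, ∑ j, ∫ ν in Set.Icc (0:ℝ) 1, A i j * f ν j i := by
        exact Finset.sum_congr rfl fun i _ => Finset.sum_congr rfl fun j _ => h1 i j
    _ = ∑ i, ∫ ν in Set.Icc (0:ℝ) 1, ∑ j, A i j * f ν j i := by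
        refine Finset.sum_congr rfl fun i _ => ?_
        exact (integral_finset_sum _ fun j _ => ((hf j i).const_mul _)).symm
    _ = ∫ ν in Set.Icc (0:ℝ) 1, ∑ i, ∑ j, A i j * f ν j i := by
        exact (integral_finset_sum _ fun i _ =>
          integrable_finset_sum _ fun j _ => ((hf j i).const_mul _)).symm

lemma psi_trace_key (S : ℝ → ℝ) (hS : IntegrableOn S (Set.Icc (0 : ℝ) 1))
    (n m : ℕ) (hn : 1 ≤ n)
    (A : Matrix (Fin n) (Fin n) ℂ) (B : Matrix (Fin m) (Fin m) ℂ) :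
    (1 / (n : ℂ)) * (A * Psi S n m B).trace
      = ∫ ν in Set.Icc (0:ℝ) 1, (S ν : ℂ) * (qform B ν * qform A ν) := by
  have hn0 : (n : ℂ) ≠ 0 := by
    exact Nat.cast_ne_zero.mpr (by omega)
  have hint : ∀ i j : Fin n, IntegrableOn
      (fun ν => (((S ν : ℂ) * (star (avec m ν) ⬝ᵥ B.mulVec (avec m ν))) •
        Matrix.vecMulVec (dvec n ν) (star (dvec n ν))) i j) (Set.Icc (0:ℝ) 1) := by
    intro i j
    have heq : (fun ν => (((S ν : ℂ) * (star (avec m ν) ⬝ᵥ B.mulVec (avec m ν))) •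
        Matrix.vecMulVec (dvec n ν) (star (dvec n ν))) i j)
        = fun ν => (S ν : ℂ) * (qform B ν * (dvec n ν i * star (dvec n ν j))) := by
      funext ν
      simp only [Matrix.smul_apply, Matrix.vecMulVec_apply, Pi.star_apply, smul_eq_mul, qform]
      ring
    rw [heq]
    exact integrable_S_mul S hS _ ((continuous_qform B).mul
      ((continuous_dvec_apply n i).mul (continuous_star.comp (continuous_dvec_apply n j))))
  rw [Psi, trace_mul_mInt A _ hint, ← integral_const_mul]
  congr 1
  funext ν
  rw [Matrix.mul_smul, Matrix.trace_smul]
  have hq : star (avec m ν) ⬝ᵥ B.mulVec (avec m ν) = qform B ν := rfl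
  rw [trace_mul_vecMulVec, dot_dvec hn A ν, hq, smul_eq_mul]
  field_simp

/-- trace-duality of the Toeplitzification operators. -/
theorem psi_trace_duality (S : ℝ → ℝ)
    (hS : IntegrableOn S (Set.Icc (0 : ℝ) 1))
    (K R : ℕ) (hK : 1 ≤ K) (hR : 1 ≤ R)
    (A : Matrix (Fin K) (Fin K) ℂ) (B : Matrix (Fin R) (Fin R) ℂ) :
    (1 / (K : ℂ)) * (A * Psi S K R B).trace = (1 / (R : ℂ)) * (Psi S R K A * B).trace := by
  rw [Matrix.trace_mul_comm (Psi S R K A) B]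
  rw [psi_trace_key S hS K R hK A B, psi_trace_key S hS R K hR B A]
  congr 1
  funext ν
  ring
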